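/- In a finite single-player type space, a probability distribution P over Ω is either disintegrable with respect to (ℳ,t) or a money pump, but not both; i.e., P lies in the convex hull of the types if and only if there is no function f : Ω → ℝ with Σ_ω f(ω) t(ω',{ω}) ≥ 0 for all ω' ∈ Ω and Σ_ω f(ω) P({ω}) < 0. -/

import Mathlib

open Finset

/-- in a finite single-player type space, a probability distribution is either
disintegrable (equivalently, in the convex hull of the types) or a money pump, but not both:
`P` is in the convex hull of the types iff there is no non-negative valued bet with strictly
negative expectation under `P`. -/
theorem stmt_3 {Ω : Type*} [Fintype Ω] [DecidableEq Ω]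
    (r : Ω → Ω → Prop) (hr : Equivalence r)
    (t : Ω → Ω → ℝ)
    (ht0 : ∀ ω a, 0 ≤ t ω a) (ht1 : ∀ ω, ∑ a, t ω a = 1)
    (hmeas : ∀ ω ω', r ω ω' → t ω = t ω')
    (hatom : ∀ ω a, ¬ r ω a → t ω a = 0)
    (P : Ω → ℝ) (hP0 : ∀ a, 0 ≤ P a) (hP1 : ∑ a, P a = 1) :
    P ∈ convexHull ℝ (Set.range t) ↔
      ¬ ∃ f : Ω → ℝ, (∀ ω', 0 ≤ ∑ ω, f ω * t ω' ω) ∧ ∑ ω, f ω * P ω < 0 := by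
  constructor
  · rintro hP ⟨f, hf0, hfP⟩
    have hS : convexHull ℝ (Set.range t) ⊆ {q : Ω → ℝ | 0 ≤ ∑ ω, f ω * q ω} := by
      apply convexHull_min
      · rintro _ ⟨ω', rfl⟩; exact hf0 ω'
      · intro x hx y hy a b ha hb hab
        simp only [Set.mem_setOf_eq] at hx hy ⊢
        have : ∑ ω, f ω * (a • x + b • y) ω
            = a * ∑ ω, f ω * x ω + b * ∑ ω, f ω * y ω := by
          rw [Finset.mul_sum, Finset.mul_sum, ← Finset.sum_add_distrib]
          refine Finset.sum_congr rfl fun ω _ => ?_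
          simp [smul_eq_mul]; ring
        rw [this]
        exact add_nonneg (mul_nonneg ha hx) (mul_nonneg hb hy)
    exact absurd (hS hP) (not_le.2 hfP)
  · intro hno
    by_contra hP
    have hconv : Convex ℝ (convexHull ℝ (Set.range t)) := convex_convexHull ℝ _
    have hclosed : IsClosed (convexHull ℝ (Set.range t)) :=
      ((Set.finite_range t).isCompact_convexHull (𝕜 := ℝ)).isClosed
    obtain ⟨φ, u, hs, hx⟩ := geometric_hahn_banach_closed_point hconv hclosed hP
    set g : Ω → ℝ := fun ω => φ (Pi.single ω 1) with hg
    have hφ : ∀ x : Ω → ℝ, φ x = ∑ ω, x ω * g ω := by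
      intro x
      have hx' : x = ∑ ω, x ω • (Pi.single ω (1 : ℝ) : Ω → ℝ) := by
        funext a
        simp [Finset.sum_apply, Pi.single_apply, mul_comm]
      conv_lhs => rw [hx']
      simp [map_sum, map_smul, hg, smul_eq_mul]
    have key : ∀ q : Ω → ℝ, (∑ a, q a = 1) →
        ∑ ω, (u - g ω) * q ω = u - φ q := by
      intro q hq
      rw [hφ]
      have : ∑ ω, (u - g ω) * q ω = u * ∑ ω, q ω - ∑ ω, q ω * g ω := by
        rw [Finset.mul_sum, ← Finset.sum_sub_distrib]
        refine Finset.sum_congr rfl fun ω _ => by ring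
      rw [this, hq, mul_one]
    refine hno ⟨fun ω => u - g ω, fun ω' => ?_, ?_⟩
    · rw [key (t ω') (ht1 ω')]
      have h := hs (t ω') (subset_convexHull ℝ _ ⟨ω', rfl⟩)
      linarith
    · rw [key P hP1]
      linarith
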